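/- arXiv:1905.04774 — 2 statements merged into one kernel-verified Lean document; each statement's English description precedes it below -/
import Mathlib

section
/- Let Γ be a group, δ ∈ Γ an element, and θ₁ : Γ → F₁, θ₂ : Γ → F₂ surjective homomorphisms onto finite groups with torsion-free kernels. Let Θ(g) = (θ₁(g), θ₂(g)) : Γ → F₁ × F₂. Suppose θᵢ(δ) has order kᵢ for i = 1, 2, and every prime dividing gcd(k₁, k₂) appears with distinct exponents in k₁ and k₂. Then H = Θ⁻¹⟨(θ₁(δ), θ₂(δ))⟩ is a torsion-free subgroup of finite index in Γ containing δ. -/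
private theorem subgroup_lemma_aux {Γ F : Type*} [Group Γ] [Group F] (θ : Γ →* F)
    (htf : ∀ x ∈ θ.ker, IsOfFinOrder x → x = 1) (g : Γ) (hfin : IsOfFinOrder g) :
    orderOf g = orderOf (θ g) := by
  refine Nat.dvd_antisymm ?_ (orderOf_map_dvd θ g)
  refine orderOf_dvd_of_pow_eq_one (htf _ ?_ (hfin.pow))
  rw [MonoidHom.mem_ker, map_pow, pow_orderOf_eq_one]

private theorem subgroup_lemma_zpow {F : Type*} [Group F] [Finite F] (m : ℤ) (a : F) :
    orderOf (a ^ m) = orderOf a / Nat.gcd (orderOf a) m.natAbs := by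
  rcases Int.natAbs_eq m with h | h
  · rw [h, zpow_natCast, (isOfFinOrder_of_finite a).orderOf_pow]; simp [Int.natAbs_abs]
  · rw [h, zpow_neg, zpow_natCast, orderOf_inv,
      (isOfFinOrder_of_finite a).orderOf_pow]; simp [Int.natAbs_abs]

/-- Subgroup Lemma (Long–Reid): if `θ₁, θ₂` are surjections onto finite groups with
torsion-free kernels and the orders `k₁, k₂` of `θ₁ δ, θ₂ δ` are such that every prime
dividing `gcd k₁ k₂` appears with distinct exponents in `k₁` and `k₂`, then the preimage
under `Θ = (θ₁, θ₂)` of the cyclic subgroup generated by `(θ₁ δ, θ₂ δ)` is a torsion-free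
finite-index subgroup containing `δ`. -/
theorem subgroup_lemma {Γ F₁ F₂ : Type*} [Group Γ] [Group F₁] [Group F₂]
    [Finite F₁] [Finite F₂]
    (θ₁ : Γ →* F₁) (θ₂ : Γ →* F₂)
    (h₁ : Function.Surjective θ₁) (h₂ : Function.Surjective θ₂)
    (htf₁ : ∀ g ∈ θ₁.ker, IsOfFinOrder g → g = 1)
    (htf₂ : ∀ g ∈ θ₂.ker, IsOfFinOrder g → g = 1)
    (δ : Γ) (k₁ k₂ : ℕ) (hk₁ : orderOf (θ₁ δ) = k₁) (hk₂ : orderOf (θ₂ δ) = k₂)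
    (hexp : ∀ p : ℕ, p.Prime → p ∣ Nat.gcd k₁ k₂ →
      k₁.factorization p ≠ k₂.factorization p) :
    let Θ : Γ →* F₁ × F₂ := θ₁.prod θ₂
    let H : Subgroup Γ := Subgroup.comap Θ (Subgroup.zpowers (θ₁ δ, θ₂ δ))
    δ ∈ H ∧ H.FiniteIndex ∧ ∀ g ∈ H, IsOfFinOrder g → g = 1 := by
  intro Θ H
  refine ⟨?_, ?_, ?_⟩
  · exact Subgroup.mem_comap.mpr (Subgroup.mem_zpowers _)
  · have hle : Θ.ker ≤ H := by
      intro g hg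
      have : Θ g = 1 := hg
      simp only [H, Subgroup.mem_comap, this]
      exact Subgroup.one_mem _
    exact Subgroup.finiteIndex_of_le hle
  · intro g hg hfin
    obtain ⟨m, hm⟩ := Subgroup.mem_comap.mp hg
    have hm1 : θ₁ g = θ₁ δ ^ m := congrArg Prod.fst hm.symm
    have hm2 : θ₂ g = θ₂ δ ^ m := congrArg Prod.snd hm.symm
    -- orderOf g = orderOf (θᵢ g)
    have e1 : orderOf g = orderOf (θ₁ g) :=
      subgroup_lemma_aux θ₁ htf₁ g hfin
    have e2 : orderOf g = orderOf (θ₂ g) :=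
      subgroup_lemma_aux θ₂ htf₂ g hfin
    set d := orderOf g with hd
    by_cases hd1 : d = 1
    · exact orderOf_eq_one_iff.mp hd1
    · exfalso
      set n := m.natAbs with hn
      have hk₁0 : k₁ ≠ 0 := by rw [← hk₁]; exact (orderOf_pos _).ne'
      have hk₂0 : k₂ ≠ 0 := by rw [← hk₂]; exact (orderOf_pos _).ne'
      have hd₁ : d = k₁ / Nat.gcd k₁ n := by
        rw [e1, hm1, subgroup_lemma_zpow m (θ₁ δ), hk₁]
      have hd₂ : d = k₂ / Nat.gcd k₂ n := by
        rw [e2, hm2, subgroup_lemma_zpow m (θ₂ δ), hk₂]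
      have hn0 : n ≠ 0 := by
        intro h
        rw [h, Nat.gcd_zero_right, Nat.div_self (Nat.pos_of_ne_zero hk₁0)] at hd₁
        exact hd1 hd₁
      have hd0 : d ≠ 0 := hfin.orderOf_pos.ne'
      set p := d.minFac with hp
      have hpp : p.Prime := Nat.minFac_prime hd1
      have hpd : p ∣ d := Nat.minFac_dvd d
      have hdk₁ : d ∣ k₁ := hd₁ ▸ Nat.div_dvd_of_dvd (Nat.gcd_dvd_left _ _)
      have hdk₂ : d ∣ k₂ := hd₂ ▸ Nat.div_dvd_of_dvd (Nat.gcd_dvd_left _ _)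
      have hpgcd : p ∣ Nat.gcd k₁ k₂ :=
        Nat.dvd_gcd (hpd.trans hdk₁) (hpd.trans hdk₂)
      have hne := hexp p hpp hpgcd
      have hfact : ∀ k : ℕ, k ≠ 0 → d = k / Nat.gcd k n →
          d.factorization p = k.factorization p - min (k.factorization p) (n.factorization p) := by
        intro k hk0 hdk
        rw [hdk, Nat.factorization_div (Nat.gcd_dvd_left k n),
          Nat.factorization_gcd hk0 hn0]
        simp [Finsupp.inf_apply]
      have hf1 := hfact k₁ hk₁0 hd₁
      have hf2 := hfact k₂ hk₂0 hd₂
      have hpos : 1 ≤ d.factorization p :=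
        (Nat.Prime.factorization_pos_of_dvd hpp hd0 hpd)
      omega
end

section
/- For m > 2, the kernel of the reduction homomorphism GL(n, ℤ) → GL(n, ℤ/mℤ) is torsion-free. -/
open Finset

private lemma key_eq {n : ℕ} {A : Matrix (Fin n) (Fin n) ℤ} {p : ℕ} (hp : 2 ≤ p)
    (hpow : (1 + A) ^ p = 1) :
    A * (p : Matrix (Fin n) (Fin n) ℤ) =
      -∑ m ∈ range (p - 1), A ^ (m + 2) * ((p.choose (m + 2) : ℕ) : Matrix (Fin n) (Fin n) ℤ) := by
  have h := (Commute.one_right A).add_pow p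
  rw [add_comm 1 A] at hpow
  rw [hpow] at h
  obtain ⟨p', rfl⟩ : ∃ p', p = p' + 2 := ⟨p - 2, by omega⟩
  rw [Finset.sum_range_succ'] at h
  simp only [pow_zero, one_pow, one_mul, Nat.choose_zero_right, Nat.cast_one, mul_one] at h
  have h2 : ∑ k ∈ range (p' + 2), A ^ (k + 1) * (((p' + 2).choose (k + 1) : ℕ) : Matrix (Fin n) (Fin n) ℤ) = 0 := by
    have := congrArg (fun X => X - 1) h
    simpa using this.symm
  rw [Finset.sum_range_succ'] at h2
  simp only [zero_add, pow_one, Nat.choose_one_right] at h2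
  have h3 := eq_neg_of_add_eq_zero_left h2
  have h4 := congrArg Neg.neg h3
  rw [neg_neg] at h4
  rw [← h4]
  congr 1

private lemma mulNat_entry {n : ℕ} (B : Matrix (Fin n) (Fin n) ℤ) (p : ℕ) (i j : Fin n) :
    (B * (p : Matrix (Fin n) (Fin n) ℤ)) i j = B i j * p := by
  rw [show ((p : ℕ) : Matrix (Fin n) (Fin n) ℤ) = (p : ℤ) • (1 : Matrix (Fin n) (Fin n) ℤ) by simp]
  rw [Matrix.mul_smul, mul_one, Matrix.smul_apply, smul_eq_mul, mul_comm]

private lemma entry_dvd_mul {n : ℕ} {x y : ℤ} {B C : Matrix (Fin n) (Fin n) ℤ}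
    (hB : ∀ i j, x ∣ B i j) (hC : ∀ i j, y ∣ C i j) :
    ∀ i j, x * y ∣ (B * C) i j := by
  intro i j
  rw [Matrix.mul_apply]
  exact Finset.dvd_sum fun k _ => mul_dvd_mul (hB i k) (hC k j)

private lemma entry_dvd_pow {n : ℕ} {x : ℤ} {A : Matrix (Fin n) (Fin n) ℤ}
    (hA : ∀ i j, x ∣ A i j) : ∀ k, 1 ≤ k → ∀ i j, x ^ k ∣ (A ^ k) i j := by
  intro k
  induction k with
  | zero => omega
  | succ k ih =>
    intro _ i j
    rcases Nat.eq_zero_or_pos k with rfl | hk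
    · simpa using hA i j
    · rw [pow_succ, pow_succ]
      exact entry_dvd_mul (ih hk) hA i j

private lemma step {n : ℕ} {A : Matrix (Fin n) (Fin n) ℤ} {p q v : ℕ}
    (hp : p.Prime) (hq : q.Prime) (hv : 1 ≤ v) (hv2 : q = 2 → 2 ≤ v)
    (hpow : (1 + A) ^ p = 1)
    (hA : ∀ i j, (q : ℤ) ^ v ∣ A i j) :
    ∀ i j, (q : ℤ) ^ (v + 1) ∣ A i j := by
  intro i j
  have hkey := key_eq hp.two_le hpow
  have hEntry : A i j * p = -∑ m ∈ Finset.range (p - 1),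
      (A ^ (m + 2)) i j * (p.choose (m + 2) : ℤ) := by
    have := congrFun (congrFun hkey i) j
    rw [mulNat_entry] at this
    rw [this]
    rw [Matrix.neg_apply, Matrix.sum_apply]
    congr 1
    exact Finset.sum_congr rfl fun m _ => mulNat_entry _ _ i j
  by_cases hqp : q = p
  · -- q = p : show q^(v+2) divides each term
    subst hqp
    have hterm : ∀ m ∈ Finset.range (q - 1),
        (q : ℤ) ^ (v + 2) ∣ (A ^ (m + 2)) i j * (q.choose (m + 2) : ℤ) := by
      intro m hm
      simp only [Finset.mem_range] at hm
      have h2v : (q : ℤ) ^ (2 * v) ∣ (A ^ (m + 2)) i j := by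
        have h0 := entry_dvd_pow hA (m + 2) (by omega) i j
        rw [← pow_mul] at h0
        refine dvd_trans (pow_dvd_pow _ ?_) h0
        nlinarith
      rcases lt_or_eq_of_le (show m + 2 ≤ q from by omega) with hlt | heq
      · -- q ∣ choose, so q^(2v+1) ∣ term, and 2v+1 ≥ v+2
        have hc : (q : ℤ) ∣ (q.choose (m + 2) : ℤ) := by
          exact_mod_cast Int.natCast_dvd_natCast.mpr (hq.dvd_choose_self (by omega) hlt)
        have : (q : ℤ) ^ (2 * v) * q ∣ (A ^ (m + 2)) i j * (q.choose (m + 2) : ℤ) :=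
          mul_dvd_mul h2v hc
        refine dvd_trans ?_ this
        rw [← pow_succ]
        exact pow_dvd_pow _ (by omega)
      · -- m + 2 = q : q^(qv) ∣ A^q entries, qv ≥ v+2
        have hqv : (q : ℤ) ^ (v + 2) ∣ (A ^ (m + 2)) i j := by
          have h0 := entry_dvd_pow hA (m + 2) (by omega) i j
          rw [← pow_mul] at h0
          refine dvd_trans (pow_dvd_pow _ ?_) h0
          -- v + 2 ≤ (m+2) * v where m+2 = q
          have h2q : 2 ≤ q := hq.two_le
          rcases Nat.lt_or_ge q 3 with h3 | h3
          · have : q = 2 := by omega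
            have := hv2 this
            nlinarith
          · nlinarith
        exact hqv.mul_right _
    have : (q : ℤ) ^ (v + 2) ∣ A i j * q := by
      rw [hEntry]
      exact (Finset.dvd_sum hterm).neg_right
    have hq0 : (q : ℤ) ≠ 0 := by exact_mod_cast hq.ne_zero
    rw [show v + 2 = (v + 1) + 1 from rfl, pow_succ] at this
    exact (mul_dvd_mul_iff_right hq0).mp this
  · -- q ≠ p : q^(v+1) ∣ sum (since 2v ≥ v+1), and coprime to p
    have hterm : ∀ m ∈ Finset.range (p - 1),
        (q : ℤ) ^ (v + 1) ∣ (A ^ (m + 2)) i j * (p.choose (m + 2) : ℤ) := by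
      intro m hm
      have h2v : (q : ℤ) ^ (2 * v) ∣ (A ^ (m + 2)) i j := by
        have h0 := entry_dvd_pow hA (m + 2) (by omega) i j
        rw [← pow_mul] at h0
        refine dvd_trans (pow_dvd_pow _ ?_) h0
        nlinarith
      exact (dvd_trans (pow_dvd_pow _ (by omega)) h2v).mul_right _
    have hdvd : (q : ℤ) ^ (v + 1) ∣ A i j * p := by
      rw [hEntry]
      exact (Finset.dvd_sum hterm).neg_right
    have hcop : IsCoprime ((q : ℤ) ^ (v + 1)) (p : ℤ) := by
      rw [show ((q : ℤ) ^ (v + 1)) = ((q ^ (v + 1) : ℕ) : ℤ) by push_cast; ring]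
      rw [Nat.isCoprime_iff_coprime]
      exact (Nat.coprime_primes hq hp).mpr hqp |>.pow_left _
    exact hcop.dvd_of_dvd_mul_right hdvd

private lemma core_zero {n : ℕ} {A : Matrix (Fin n) (Fin n) ℤ} {p q v : ℕ}
    (hp : p.Prime) (hq : q.Prime) (hv : 1 ≤ v) (hv2 : q = 2 → 2 ≤ v)
    (hpow : (1 + A) ^ p = 1)
    (hA : ∀ i j, (q : ℤ) ^ v ∣ A i j) : A = 0 := by
  have hall : ∀ k, ∀ i j, (q : ℤ) ^ (v + k) ∣ A i j := by
    intro k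
    induction k with
    | zero => simpa using hA
    | succ k ih =>
      have := step hp hq (by omega) (fun h => by have := hv2 h; omega) hpow ih
      simpa [← add_assoc] using this
  ext i j
  simp only [Matrix.zero_apply]
  have hdvd : ∀ k : ℕ, (q : ℤ) ^ k ∣ A i j := fun k =>
    dvd_trans (pow_dvd_pow _ (Nat.le_add_left k v)) (hall k i j)
  set N := (A i j).natAbs with hN
  have h1 : ((q : ℤ) ^ N) ∣ A i j := hdvd N
  have h2 : (A i j).natAbs < ((q : ℤ) ^ N).natAbs := by
    rw [show ((q : ℤ) ^ N) = ((q ^ N : ℕ) : ℤ) by push_cast; ring, Int.natAbs_natCast]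
    exact Nat.lt_pow_self (n := N) hq.one_lt
  exact Int.eq_zero_of_dvd_of_natAbs_lt_natAbs h1 h2

private lemma exists_qv {m : ℕ} (hm : 2 < m) :
    ∃ q v : ℕ, q.Prime ∧ 1 ≤ v ∧ (q = 2 → 2 ≤ v) ∧ (q : ℤ) ^ v ∣ (m : ℤ) := by
  rcases Nat.even_or_odd m with he | ho
  · obtain ⟨m', rfl⟩ := he
    rcases Nat.even_or_odd m' with he' | ho'
    · refine ⟨2, 2, Nat.prime_two, by omega, fun _ => le_refl _, ?_⟩
      obtain ⟨m'', rfl⟩ := he'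
      push_cast
      ring_nf
      exact ⟨m'', by ring⟩
    · have hm' : m' ≠ 1 := by omega
      have hm'2 : 2 ≤ m' := by omega
      refine ⟨m'.minFac, 1, Nat.minFac_prime hm', le_refl _, ?_, ?_⟩
      · intro h2
        have := Nat.minFac_dvd m'
        rw [h2] at this
        exact absurd (ho'.of_dvd_nat this) (by simp [Nat.odd_iff])
      · have : (m'.minFac : ℕ) ∣ m' + m' := Dvd.dvd.add (Nat.minFac_dvd m') (Nat.minFac_dvd m')
        simpa using Int.natCast_dvd_natCast.mpr this
  · have hm1 : m ≠ 1 := by omega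
    refine ⟨m.minFac, 1, Nat.minFac_prime hm1, le_refl _, ?_, ?_⟩
    · intro h2
      have := Nat.minFac_dvd m
      rw [h2] at this
      exact absurd (ho.of_dvd_nat this) (by simp [Nat.odd_iff])
    · simpa using Int.natCast_dvd_natCast.mpr (Nat.minFac_dvd m)

private lemma ker_entry {n m : ℕ} {g : GL (Fin n) ℤ}
    (hg : g ∈ (Matrix.GeneralLinearGroup.map (n := Fin n) (Int.castRingHom (ZMod m))).ker) :
    ∀ i j, (m : ℤ) ∣ ((g : Matrix (Fin n) (Fin n) ℤ) - 1) i j := by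
  intro i j
  rw [MonoidHom.mem_ker] at hg
  have h1 : (Matrix.GeneralLinearGroup.map (n := Fin n) (Int.castRingHom (ZMod m)) g) i j
      = (1 : GL (Fin n) (ZMod m)) i j := by rw [hg]
  rw [Matrix.GeneralLinearGroup.map_apply] at h1
  have h2 : ((1 : GL (Fin n) (ZMod m)) : Matrix (Fin n) (Fin n) (ZMod m)) i j
      = ((1 : Matrix (Fin n) (Fin n) ℤ) i j : ℤ) := by
    rcases eq_or_ne i j with rfl | hij
    · simp [Matrix.one_apply]
    · simp [Matrix.one_apply, hij]
  rw [← ZMod.intCast_zmod_eq_zero_iff_dvd]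
  have : (((g : Matrix (Fin n) (Fin n) ℤ) - 1) i j : ℤ)
      = (g : Matrix (Fin n) (Fin n) ℤ) i j - (1 : Matrix (Fin n) (Fin n) ℤ) i j := by
    simp [Matrix.sub_apply]
  rw [this]
  push_cast
  rw [show ((g : Matrix (Fin n) (Fin n) ℤ) i j : ZMod m) = Int.castRingHom (ZMod m) ((g : Matrix (Fin n) (Fin n) ℤ) i j) from rfl]
  rw [h1, h2]
  ring_nf

private lemma prime_pow_eq_one {n m : ℕ} (hm : 2 < m) {g : GL (Fin n) ℤ} {p : ℕ}
    (hp : p.Prime) (hgp : g ^ p = 1)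
    (hg : g ∈ (Matrix.GeneralLinearGroup.map (n := Fin n) (Int.castRingHom (ZMod m))).ker) :
    g = 1 := by
  obtain ⟨q, v, hq, hv, hv2, hqm⟩ := exists_qv hm
  set A : Matrix (Fin n) (Fin n) ℤ := (g : Matrix (Fin n) (Fin n) ℤ) - 1 with hA
  have hApow : (1 + A) ^ p = 1 := by
    have : (1 : Matrix (Fin n) (Fin n) ℤ) + A = (g : Matrix (Fin n) (Fin n) ℤ) := by
      rw [hA]; abel
    rw [this, ← Units.val_pow_eq_pow_val, hgp, Units.val_one]
  have hAd : ∀ i j, (q : ℤ) ^ v ∣ A i j := fun i j =>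
    dvd_trans hqm (ker_entry hg i j)
  have hA0 : A = 0 := core_zero hp hq hv hv2 hApow hAd
  have : (g : Matrix (Fin n) (Fin n) ℤ) = 1 := by
    have := congrArg (fun X => X + (1 : Matrix (Fin n) (Fin n) ℤ)) hA0
    simpa [hA, sub_add_cancel] using this
  exact Units.ext this

/-- Minkowski's theorem: for `m > 2`, the kernel of the reduction homomorphism
`GL(n, ℤ) → GL(n, ℤ/mℤ)` is torsion-free. -/
theorem ker_reduction_torsionFree (n m : ℕ) (hm : 2 < m) :
    ∀ g ∈ (Matrix.GeneralLinearGroup.map (n := Fin n) (Int.castRingHom (ZMod m))).ker,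
      IsOfFinOrder g → g = 1 := by
  intro g hg hfin
  by_contra hne
  set N := orderOf g with hN
  have hN0 : 0 < N := hfin.orderOf_pos
  have hN1 : N ≠ 1 := fun h => hne (orderOf_eq_one_iff.mp h)
  set p := N.minFac with hp
  have hpp : p.Prime := Nat.minFac_prime hN1
  set h := g ^ (N / p) with hh
  have hhker : h ∈ (Matrix.GeneralLinearGroup.map (n := Fin n) (Int.castRingHom (ZMod m))).ker :=
    Subgroup.pow_mem _ hg _
  have hhp : h ^ p = 1 := by
    rw [hh, ← pow_mul, Nat.div_mul_cancel (Nat.minFac_dvd N)]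
    exact pow_orderOf_eq_one g
  have hh1 : h = 1 := prime_pow_eq_one hm hpp hhp hhker
  have : N ∣ N / p := orderOf_dvd_of_pow_eq_one (by rw [← hh]; exact hh1)
  have hlt : N / p < N := Nat.div_lt_self hN0 hpp.one_lt
  have hle : N ≤ N / p :=
    Nat.le_of_dvd (Nat.div_pos (Nat.minFac_le hN0) hpp.pos) this
  exact absurd hle (not_le.mpr hlt)
end
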